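/- Assume the linear model y_i = ⟨x_i, β₀⟩ + ε_i, i = 1,…,n, with fixed design X ∈ ℝ^{n×p} whose columns satisfy (1/n)Σᵢ x_{i,j}² = 1, and with ε₁,…,ε_n i.i.d. Gaussian with mean 0 and variance σ². Let α ∈ (0,1], t > 0, λ_d ≥ 0, and assume λ_s ≥ (1/α)·σ·√((t² + 2 log p)/n). Let (β̂¹,…,β̂^G) be any global minimizer of the SplitReg objective. Then with probability at least 1 − 2·exp(−t²/2), (1/(2n))·‖ X·((1/G)Σ_{g=1}^G β̂^g) − X β₀ ‖₂² ≤ 2α λ_s ‖β₀‖₁ + λ_s·((1−α)/2)·‖β₀‖₂² + (λ_d (G−1)/2)·‖β₀‖₂². -/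

import Mathlib

open Finset

/-- The soft-thresholding operator: `soft z γ = sign(z) * max 0 (|z| - γ)`. -/
noncomputable def soft (z γ : ℝ) : ℝ := Real.sign z * max 0 (|z| - γ)

/-- The SplitReg objective function for data `y`, design matrix `X`,
elastic net mixing parameter `α`, sparsity penalty `lam_s`, diversity penalty `lam_d`,
and coefficient matrix `β` (one column `β g` per group). -/
noncomputable def splitRegObj {n p G : ℕ} (y : Fin n → ℝ) (X : Matrix (Fin n) (Fin p) ℝ)
    (α lam_s lam_d : ℝ) (β : Fin G → Fin p → ℝ) : ℝ :=
  ∑ g : Fin G,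
    ((1 / (2 * (n : ℝ))) * ∑ i, (y i - ∑ j, X i j * β g j) ^ 2
      + lam_s * ((1 - α) / 2 * ∑ j, (β g j) ^ 2 + α * ∑ j, |β g j|)
      + lam_d / 2 * ∑ h ∈ Finset.univ.erase g, ∑ j, |β g j| * |β h j|)

open MeasureTheory ProbabilityTheory

section Auxiliary

open Real Filter
open scoped NNReal ENNReal

lemma gaussianPDFReal_mul_exp (v : ℝ≥0) (hv : v ≠ 0) (u x : ℝ) :
    gaussianPDFReal 0 v x * Real.exp (u * x)
      = Real.exp (u ^ 2 * v / 2) * gaussianPDFReal (u * v) v x := by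
  have hv' : (0:ℝ) < (v:ℝ) := lt_of_le_of_ne v.coe_nonneg (by exact_mod_cast hv.symm)
  simp only [gaussianPDFReal]
  rw [mul_assoc, ← Real.exp_add]
  have h : -(x - 0) ^ 2 / (2 * (v:ℝ)) + u * x
      = u ^ 2 * v / 2 + -(x - u * v) ^ 2 / (2 * (v:ℝ)) := by
    field_simp
    ring
  rw [h, Real.exp_add]
  ring

lemma integral_exp_gaussianReal {v : ℝ≥0} (hv : v ≠ 0) (u : ℝ) :
    ∫ x, Real.exp (u * x) ∂(gaussianReal 0 v) = Real.exp (u ^ 2 * v / 2) := by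
  rw [gaussianReal_of_var_ne_zero _ hv]
  have hmeas : Measurable fun x => (gaussianPDFReal 0 v x).toNNReal :=
    (measurable_gaussianPDFReal 0 v).real_toNNReal
  have hd : (gaussianPDF 0 v) = fun x => ((gaussianPDFReal 0 v x).toNNReal : ℝ≥0∞) := rfl
  rw [hd, integral_withDensity_eq_integral_smul hmeas]
  have : ∀ x, (gaussianPDFReal 0 v x).toNNReal • Real.exp (u * x)
      = Real.exp (u ^ 2 * v / 2) * gaussianPDFReal (u * v) v x := by
    intro x
    rw [NNReal.smul_def, smul_eq_mul, Real.coe_toNNReal _ (gaussianPDFReal_nonneg _ _ _),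
      gaussianPDFReal_mul_exp v hv]
  simp only [this]
  rw [integral_const_mul, integral_gaussianPDFReal_eq_one _ hv, mul_one]

lemma integrable_exp_gaussianReal {v : ℝ≥0} (hv : v ≠ 0) (u : ℝ) :
    Integrable (fun x => Real.exp (u * x)) (gaussianReal 0 v) := by
  rw [gaussianReal_of_var_ne_zero _ hv]
  have hmeas : Measurable fun x => (gaussianPDFReal 0 v x).toNNReal :=
    (measurable_gaussianPDFReal 0 v).real_toNNReal
  have hd : (gaussianPDF 0 v) = fun x => ((gaussianPDFReal 0 v x).toNNReal : ℝ≥0∞) := rfl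
  rw [hd, integrable_withDensity_iff_integrable_smul hmeas]
  have : (fun x => (gaussianPDFReal 0 v x).toNNReal • Real.exp (u * x))
      = fun x => Real.exp (u ^ 2 * v / 2) * gaussianPDFReal (u * v) v x := by
    funext x
    rw [NNReal.smul_def, smul_eq_mul, Real.coe_toNNReal _ (gaussianPDFReal_nonneg _ _ _),
      gaussianPDFReal_mul_exp v hv]
  rw [this]
  exact (integrable_gaussianPDFReal _ _).const_mul _

lemma iIndepFun_congr_ae {ι : Type*} {Ω : Type*} [MeasurableSpace Ω] {μ : Measure Ω}
    {f g : ι → Ω → ℝ} (h : iIndepFun f μ)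
    (hfg : ∀ i, f i =ᵐ[μ] g i) : iIndepFun g μ := by
  rw [iIndepFun_iff_measure_inter_preimage_eq_mul] at h ⊢
  intro S sets hsets
  have hae' : ∀ᵐ ω ∂μ, ∀ i ∈ S, f i ω = g i ω :=
    (eventually_all_finset S).mpr fun i _ => hfg i
  have h1 : ∀ i ∈ S, μ (g i ⁻¹' sets i) = μ (f i ⁻¹' sets i) := by
    intro i hi
    refine measure_congr ?_
    filter_upwards [hfg i] with ω hω
    show (ω ∈ g i ⁻¹' sets i) = (ω ∈ f i ⁻¹' sets i)
    simp only [Set.mem_preimage, hω]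
  have h2 : μ (⋂ i ∈ S, g i ⁻¹' sets i) = μ (⋂ i ∈ S, f i ⁻¹' sets i) := by
    refine measure_congr ?_
    filter_upwards [hae'] with ω hω
    show (ω ∈ ⋂ i ∈ S, g i ⁻¹' sets i) = (ω ∈ ⋂ i ∈ S, f i ⁻¹' sets i)
    simp only [Set.mem_iInter, Set.mem_preimage, eq_iff_iff]
    exact ⟨fun hmem i hi => (hω i hi) ▸ hmem i hi, fun hmem i hi => (hω i hi).symm ▸ hmem i hi⟩
  rw [h2, h S hsets]
  exact (Finset.prod_congr rfl h1).symm

variable {Ω : Type*} [MeasurableSpace Ω] {μ : Measure Ω}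

lemma mgf_of_gauss {ε : Ω → ℝ} {v : ℝ≥0} (hv : v ≠ 0)
    (hε : Measurable ε) (hg : Measure.map ε μ = gaussianReal 0 v) (u : ℝ) :
    mgf ε μ u = Real.exp (u ^ 2 * v / 2) := by
  have hsm : AEStronglyMeasurable (fun x => Real.exp (u * x)) (Measure.map ε μ) :=
    ((measurable_id.const_mul u).exp).aestronglyMeasurable
  rw [mgf, ← integral_map hε.aemeasurable hsm, hg, integral_exp_gaussianReal hv]

lemma integrable_exp_of_gauss {ε : Ω → ℝ} {v : ℝ≥0} (hv : v ≠ 0)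
    (hε : Measurable ε) (hg : Measure.map ε μ = gaussianReal 0 v) (u : ℝ) :
    Integrable (fun ω => Real.exp (u * ε ω)) μ := by
  have hsm : AEStronglyMeasurable (fun x => Real.exp (u * x)) (Measure.map ε μ) :=
    ((measurable_id.const_mul u).exp).aestronglyMeasurable
  have := (integrable_map_measure hsm hε.aemeasurable).mp
    (by rw [hg]; exact integrable_exp_gaussianReal hv u)
  exact this

lemma gauss_sum_tail {n : ℕ} [IsProbabilityMeasure μ] (c : Fin n → ℝ) (ε : Fin n → Ω → ℝ)
    (hmeas : ∀ i, Measurable (ε i))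
    (hindep : iIndepFun ε μ)
    {v : ℝ≥0} (hv : v ≠ 0)
    (hg : ∀ i, Measure.map (ε i) μ = gaussianReal 0 v)
    {a w : ℝ} (ha : 0 < a) (hw : w = v * ∑ i, c i ^ 2) (hw0 : 0 < w) :
    (μ {ω | a ≤ ∑ i, c i * ε i ω}).toReal ≤ Real.exp (-a ^ 2 / (2 * w)) := by
  set s := a / w with hs_def
  have hs : 0 ≤ s := by positivity
  set Y : Fin n → Ω → ℝ := fun i ω => c i * ε i ω with hY
  have hYmeas : ∀ i, Measurable (Y i) := fun i => (hmeas i).const_mul _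
  have hYindep : iIndepFun Y μ :=
    hindep.comp (fun i x => c i * x) (fun i => measurable_id.const_mul _)
  have hYint : ∀ i, Integrable (fun ω => Real.exp (s * Y i ω)) μ := by
    intro i
    have := integrable_exp_of_gauss hv (hmeas i) (hg i) (s * c i)
    simpa [hY, mul_assoc] using this
  have hYmgf : ∀ i, mgf (Y i) μ s = Real.exp ((s * c i) ^ 2 * v / 2) := by
    intro i
    rw [← mgf_of_gauss hv (hmeas i) (hg i) (s * c i)]
    simp only [mgf, hY, mul_assoc]
  have hset : {ω | a ≤ ∑ i, c i * ε i ω} = {ω | a ≤ (∑ i, Y i) ω} := by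
    ext ω; simp [hY, Finset.sum_apply]
  have h_int : Integrable (fun ω => Real.exp (s * (∑ i, Y i) ω)) μ :=
    hYindep.integrable_exp_mul_sum hYmeas (fun i _ => hYint i)
  have hchern := measure_ge_le_exp_mul_mgf (X := ∑ i, Y i) (μ := μ) a hs h_int
  rw [hset]
  refine hchern.trans ?_
  rw [hYindep.mgf_sum hYmeas Finset.univ]
  have hprod : ∏ i, mgf (Y i) μ s = Real.exp (s ^ 2 * w / 2) := by
    simp_rw [hYmgf]
    rw [← Real.exp_sum]
    congr 1
    rw [hw, Finset.mul_sum, Finset.mul_sum, ← Finset.sum_div]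
    congr 1
    refine Finset.sum_congr rfl fun i _ => by ring
  rw [hprod, ← Real.exp_add]
  have : -s * a + s ^ 2 * w / 2 = -a ^ 2 / (2 * w) := by
    rw [hs_def]; field_simp; ring
  rw [this]


lemma det_bound {n p G : ℕ} (hn : 0 < n) (hG : 0 < G) (X : Matrix (Fin n) (Fin p) ℝ)
    (β0 : Fin p → ℝ) (e : Fin n → ℝ) (α lam_s lam_d : ℝ)
    (hα₂ : α ≤ 1) (hd : 0 ≤ lam_d) (hs : 0 ≤ lam_s) (hsa : 0 ≤ α * lam_s)
    (b : Fin G → Fin p → ℝ)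
    (hmin : splitRegObj (fun i => ∑ j, X i j * β0 j + e i) X α lam_s lam_d b
      ≤ splitRegObj (fun i => ∑ j, X i j * β0 j + e i) X α lam_s lam_d (fun _ : Fin G => β0))
    (hmax : ∀ j, |∑ i, X i j * e i| ≤ (n : ℝ) * (α * lam_s)) :
    (1 / (2 * (n:ℝ))) * ∑ i, ((∑ j, X i j * ((1 / (G:ℝ)) * ∑ g, b g j)) - ∑ j, X i j * β0 j) ^ 2
      ≤ 2 * α * lam_s * (∑ j, |β0 j|) + lam_s * ((1 - α) / 2) * (∑ j, (β0 j) ^ 2)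
        + lam_d * ((G:ℝ) - 1) / 2 * (∑ j, (β0 j) ^ 2) := by
  have hn' : (0:ℝ) < n := by exact_mod_cast hn
  have hG' : (0:ℝ) < G := by exact_mod_cast hG
  set y : Fin n → ℝ := fun i => ∑ j, X i j * β0 j + e i with hy
  set a : ℝ := α * lam_s with ha
  set B1 : ℝ := ∑ j, |β0 j| with hB1
  set B2 : ℝ := ∑ j, (β0 j) ^ 2 with hB2
  set E : ℝ := ∑ i, e i ^ 2 with hE
  set bbar : Fin p → ℝ := fun j => (1 / (G:ℝ)) * ∑ g, b g j with hbbar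
  set Abar : ℝ := ∑ j, |bbar j| with hAbar
  set Z : Fin G → Fin n → ℝ := fun g i => y i - ∑ j, X i j * b g j with hZ
  set L : Fin G → ℝ := fun g => ∑ i, Z g i ^ 2 with hL
  set N : Fin G → ℝ := fun g => ∑ j, |b g j| with hN
  set RHS0 : ℝ := (1 / (2 * (n:ℝ))) * E + lam_s * ((1 - α) / 2 * B2 + α * B1)
      + lam_d / 2 * (((G:ℝ) - 1) * B2) with hRHS0
  -- F0 : objective at the β0-stack
  have hB2nonneg : 0 ≤ B2 := Finset.sum_nonneg fun j _ => sq_nonneg _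
  have F0 : splitRegObj y X α lam_s lam_d (fun _ : Fin G => β0) = (G:ℝ) * RHS0 := by
    simp only [splitRegObj]
    have hsummand : ∀ g : Fin G,
        ((1 / (2 * (n : ℝ))) * ∑ i, (y i - ∑ j, X i j * β0 j) ^ 2
          + lam_s * ((1 - α) / 2 * ∑ j, (β0 j) ^ 2 + α * ∑ j, |β0 j|)
          + lam_d / 2 * ∑ h ∈ Finset.univ.erase g, ∑ j, |β0 j| * |β0 j|) = RHS0 := by
      intro g
      have h1 : ∀ i, y i - ∑ j, X i j * β0 j = e i := fun i => add_sub_cancel_left _ _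
      have h2 : (∑ j, |β0 j| * |β0 j|) = B2 := by
        refine Finset.sum_congr rfl fun j _ => ?_
        rw [abs_mul_abs_self, ← sq]
      have h3 : ∑ h ∈ Finset.univ.erase g, ∑ j, |β0 j| * |β0 j| = ((G:ℝ) - 1) * B2 := by
        rw [Finset.sum_const, Finset.card_erase_of_mem (Finset.mem_univ g), Finset.card_univ,
          Fintype.card_fin, nsmul_eq_mul, h2]
        congr 1
        rw [Nat.cast_sub hG, Nat.cast_one]
      simp only [h1, h3, hRHS0, hE, hB2, hB1]
    rw [Finset.sum_congr rfl (fun g _ => hsummand g), Finset.sum_const, Finset.card_univ,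
      Fintype.card_fin, nsmul_eq_mul]
  -- F1 : lower bound for the objective at b
  have F1 : ∑ g, ((1 / (2 * (n:ℝ))) * L g + a * N g) ≤ splitRegObj y X α lam_s lam_d b := by
    simp only [splitRegObj]
    refine Finset.sum_le_sum fun g _ => ?_
    have h1 : 0 ≤ lam_s * ((1 - α) / 2 * ∑ j, (b g j) ^ 2) := by
      apply mul_nonneg hs
      apply mul_nonneg (by linarith) (Finset.sum_nonneg fun j _ => sq_nonneg _)
    have h2 : 0 ≤ lam_d / 2 * ∑ h ∈ Finset.univ.erase g, ∑ j, |b g j| * |b h j| := by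
      apply mul_nonneg (by linarith)
      exact Finset.sum_nonneg fun h _ => Finset.sum_nonneg fun j _ =>
        mul_nonneg (abs_nonneg _) (abs_nonneg _)
    have : a * N g = lam_s * (α * ∑ j, |b g j|) := by rw [ha, hN]; ring
    rw [this]
    have hLg : L g = ∑ i, (y i - ∑ j, X i j * b g j) ^ 2 := rfl
    nlinarith [h1, h2]
  -- F2 : convexity of the quadratic loss
  have F2 : (∑ i, (y i - ∑ j, X i j * bbar j) ^ 2) ≤ (1 / (G:ℝ)) * ∑ g, L g := by
    have hpt : ∀ i, y i - ∑ j, X i j * bbar j = (1 / (G:ℝ)) * ∑ g, Z g i := by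
      intro i
      have h1 : ∑ j, X i j * bbar j = ∑ g, ∑ j, (1 / (G:ℝ)) * (X i j * b g j) := by
        rw [Finset.sum_comm]
        refine Finset.sum_congr rfl fun j _ => ?_
        simp only [hbbar]
        rw [Finset.mul_sum, Finset.mul_sum]
        exact Finset.sum_congr rfl fun g _ => by ring
      have h2 : (1 / (G:ℝ)) * ∑ g, Z g i
          = ∑ g, ((1 / (G:ℝ)) * y i - ∑ j, (1 / (G:ℝ)) * (X i j * b g j)) := by
        rw [Finset.mul_sum]
        refine Finset.sum_congr rfl fun g _ => ?_
        simp only [hZ]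
        rw [mul_sub, Finset.mul_sum]
      have h3 : ∑ _g : Fin G, ((1 / (G:ℝ)) * y i) = y i := by
        rw [Finset.sum_const, Finset.card_univ, Fintype.card_fin, nsmul_eq_mul]
        field_simp
      rw [h1, h2, Finset.sum_sub_distrib, h3]
    have hsq : ∀ i, (y i - ∑ j, X i j * bbar j) ^ 2 ≤ (1 / (G:ℝ)) * ∑ g, Z g i ^ 2 := by
      intro i
      rw [hpt i, mul_pow]
      have hcs := sq_sum_le_card_mul_sum_sq (s := (Finset.univ : Finset (Fin G)))
        (f := fun g => Z g i)
      rw [Finset.card_univ, Fintype.card_fin] at hcs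
      calc ((1:ℝ) / G) ^ 2 * (∑ g, Z g i) ^ 2
          ≤ ((1:ℝ) / G) ^ 2 * ((G:ℝ) * ∑ g, Z g i ^ 2) := by
            refine mul_le_mul_of_nonneg_left ?_ (by positivity)
            exact_mod_cast hcs
        _ = (1 / (G:ℝ)) * ∑ g, Z g i ^ 2 := by field_simp
    calc (∑ i, (y i - ∑ j, X i j * bbar j) ^ 2) ≤ ∑ i, (1 / (G:ℝ)) * ∑ g, Z g i ^ 2 :=
          Finset.sum_le_sum fun i _ => hsq i
      _ = (1 / (G:ℝ)) * ∑ g, L g := by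
          rw [← Finset.mul_sum]
          congr 1
          exact Finset.sum_comm
  -- F3 : ℓ1 norm of the average
  have F3 : Abar ≤ (1 / (G:ℝ)) * ∑ g, N g := by
    have hj : ∀ j, |bbar j| ≤ (1 / (G:ℝ)) * ∑ g, |b g j| := by
      intro j
      simp only [hbbar]
      calc |(1 / (G:ℝ)) * ∑ g, b g j| = (1 / (G:ℝ)) * |∑ g, b g j| := by
            rw [abs_mul, abs_of_nonneg (by positivity : (0:ℝ) ≤ 1 / (G:ℝ))]
        _ ≤ (1 / (G:ℝ)) * ∑ g, |b g j| := by
            refine mul_le_mul_of_nonneg_left ?_ (by positivity)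
            exact Finset.abs_sum_le_sum_abs _ _
    calc Abar ≤ ∑ j, (1 / (G:ℝ)) * ∑ g, |b g j| := Finset.sum_le_sum fun j _ => hj j
      _ = (1 / (G:ℝ)) * ∑ g, N g := by
          rw [← Finset.mul_sum]
          congr 1
          exact Finset.sum_comm
  -- F4 : expansion of the loss at the average
  set T : Fin n → ℝ := fun i => ∑ j, X i j * (bbar j - β0 j) with hT
  set Q : ℝ := ∑ i, T i ^ 2 with hQ
  set C : ℝ := ∑ j, (bbar j - β0 j) * (∑ i, X i j * e i) with hC
  have hpt2 : ∀ i, y i - ∑ j, X i j * bbar j = e i - T i := by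
    intro i
    simp only [hy, hT, mul_sub]
    rw [Finset.sum_sub_distrib]
    ring
  have hCalt : ∑ i, e i * T i = C := by
    calc ∑ i, e i * T i = ∑ i, ∑ j, (bbar j - β0 j) * (X i j * e i) := by
          refine Finset.sum_congr rfl fun i _ => ?_
          simp only [hT]
          rw [Finset.mul_sum]
          exact Finset.sum_congr rfl fun j _ => by ring
      _ = ∑ j, ∑ i, (bbar j - β0 j) * (X i j * e i) := Finset.sum_comm
      _ = C := by
          simp only [hC]
          exact Finset.sum_congr rfl fun j _ => (Finset.mul_sum _ _ _).symm
  have F4 : ∑ i, (y i - ∑ j, X i j * bbar j) ^ 2 = Q - 2 * C + E := by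
    calc ∑ i, (y i - ∑ j, X i j * bbar j) ^ 2
        = ∑ i, (T i ^ 2 - 2 * (e i * T i) + e i ^ 2) := by
          refine Finset.sum_congr rfl fun i _ => ?_
          rw [hpt2 i]; ring
      _ = Q - 2 * C + E := by
          rw [Finset.sum_add_distrib, Finset.sum_sub_distrib, ← Finset.mul_sum, hCalt]
  -- F5 : bound on the cross term
  have F5 : C ≤ (n:ℝ) * (a * (Abar + B1)) := by
    calc C ≤ ∑ j, |bbar j - β0 j| * |∑ i, X i j * e i| := by
          refine Finset.sum_le_sum fun j _ => ?_
          calc (bbar j - β0 j) * (∑ i, X i j * e i)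
              ≤ |(bbar j - β0 j) * (∑ i, X i j * e i)| := le_abs_self _
            _ = |bbar j - β0 j| * |∑ i, X i j * e i| := abs_mul _ _
      _ ≤ ∑ j, (|bbar j| + |β0 j|) * ((n:ℝ) * a) := by
          refine Finset.sum_le_sum fun j _ => ?_
          have habs : |bbar j - β0 j| ≤ |bbar j| + |β0 j| := by
            calc |bbar j - β0 j| = |bbar j + -β0 j| := by rw [sub_eq_add_neg]
              _ ≤ |bbar j| + |-β0 j| := abs_add_le _ _
              _ = |bbar j| + |β0 j| := by rw [abs_neg]
          exact mul_le_mul habs (hmax j) (abs_nonneg _) (by positivity)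
      _ = (n:ℝ) * (a * (Abar + B1)) := by
          rw [← Finset.sum_mul, Finset.sum_add_distrib]
          simp only [hAbar, hB1]
          ring
  -- assembling everything
  have hA : (1 / (2 * (n:ℝ))) * (∑ i, (y i - ∑ j, X i j * bbar j) ^ 2) + a * Abar
      ≤ (1 / (2 * (n:ℝ))) * ((1 / (G:ℝ)) * ∑ g, L g) + a * ((1 / (G:ℝ)) * ∑ g, N g) :=
    add_le_add (mul_le_mul_of_nonneg_left F2 (by positivity))
      (mul_le_mul_of_nonneg_left F3 hsa)
  have hBeq : (1 / (G:ℝ)) * ∑ g, ((1 / (2 * (n:ℝ))) * L g + a * N g)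
      = (1 / (2 * (n:ℝ))) * ((1 / (G:ℝ)) * ∑ g, L g) + a * ((1 / (G:ℝ)) * ∑ g, N g) := by
    rw [Finset.sum_add_distrib, mul_add, ← Finset.mul_sum, ← Finset.mul_sum]
    ring
  have hC1 : (1 / (G:ℝ)) * ∑ g, ((1 / (2 * (n:ℝ))) * L g + a * N g)
      ≤ (1 / (G:ℝ)) * ((G:ℝ) * RHS0) := by
    refine mul_le_mul_of_nonneg_left ?_ (by positivity)
    calc ∑ g, ((1 / (2 * (n:ℝ))) * L g + a * N g) ≤ splitRegObj y X α lam_s lam_d b := F1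
      _ ≤ splitRegObj y X α lam_s lam_d (fun _ : Fin G => β0) := hmin
      _ = (G:ℝ) * RHS0 := F0
  have hC2 : (1 / (G:ℝ)) * ((G:ℝ) * RHS0) = RHS0 := by field_simp
  have hA' : (1 / (2 * (n:ℝ))) * (∑ i, (y i - ∑ j, X i j * bbar j) ^ 2) + a * Abar ≤ RHS0 := by
    calc _ ≤ _ := hA
      _ = (1 / (G:ℝ)) * ∑ g, ((1 / (2 * (n:ℝ))) * L g + a * N g) := hBeq.symm
      _ ≤ _ := hC1
      _ = RHS0 := hC2
  rw [F4] at hA'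
  have hexp : (1 / (2 * (n:ℝ))) * (Q - 2 * C + E)
      = (1 / (2 * (n:ℝ))) * Q - C / (n:ℝ) + (1 / (2 * (n:ℝ))) * E := by
    field_simp
  rw [hexp] at hA'
  have hC' : C / (n:ℝ) ≤ a * (Abar + B1) := by
    rw [div_le_iff₀ hn']
    exact F5.trans_eq (by ring)
  have hgoal_eq : ∑ i, ((∑ j, X i j * ((1 / (G:ℝ)) * ∑ g, b g j)) - ∑ j, X i j * β0 j) ^ 2
      = Q := by
    refine Finset.sum_congr rfl fun i _ => ?_
    congr 1
    simp only [hT, hbbar, mul_sub]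
    rw [Finset.sum_sub_distrib]
  rw [hgoal_eq]
  rw [ha] at hA' hC'
  simp only [hRHS0, ha] at hA'
  linarith [hA', hC']

end Auxiliary

open Real Filter
open scoped NNReal ENNReal

/-- **Theorem 1: consistency of SplitReg.**
Under the linear model `y = Xβ₀ + ε` with i.i.d. `N(0, σ²)` errors, normalized columns,
`α ∈ (0,1]` and `λ_s ≥ (1/α)σ√((t² + 2 log p)/n)`, any global minimizer of the SplitReg
objective satisfies, with probability at least `1 - 2 exp(-t²/2)`,
`(1/(2n))‖X((1/G)∑_g β̂^g) - Xβ₀‖² ≤ 2αλ_s‖β₀‖₁ + λ_s((1-α)/2)‖β₀‖₂² + (λ_d(G-1)/2)‖β₀‖₂²`. -/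
theorem splitreg_consistency
    {Ω : Type*} [MeasurableSpace Ω] (μ : Measure Ω) [IsProbabilityMeasure μ]
    {n p G : ℕ} (hn : 0 < n) (hp : 0 < p) (hG : 0 < G)
    (X : Matrix (Fin n) (Fin p) ℝ) (β0 : Fin p → ℝ)
    (hcol : ∀ j : Fin p, (1 / (n : ℝ)) * ∑ i, (X i j) ^ 2 = 1)
    (σ : ℝ) (hσ : 0 < σ)
    (ε : Fin n → Ω → ℝ)
    (hindep : iIndepFun ε μ)
    (hgauss : ∀ i, Measure.map (ε i) μ = gaussianReal 0 ⟨σ ^ 2, sq_nonneg σ⟩)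
    (α lam_s lam_d t : ℝ) (hα₁ : 0 < α) (hα₂ : α ≤ 1) (ht : 0 < t) (hd : 0 ≤ lam_d)
    (hls : (1 / α) * σ * Real.sqrt ((t ^ 2 + 2 * Real.log p) / n) ≤ lam_s)
    (βhat : Ω → Fin G → Fin p → ℝ)
    (hmin : ∀ ω, ∀ b : Fin G → Fin p → ℝ,
      splitRegObj (fun i => ∑ j, X i j * β0 j + ε i ω) X α lam_s lam_d (βhat ω)
        ≤ splitRegObj (fun i => ∑ j, X i j * β0 j + ε i ω) X α lam_s lam_d b) :
    ENNReal.ofReal (1 - 2 * Real.exp (-t ^ 2 / 2)) ≤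
      μ {ω | (1 / (2 * (n : ℝ))) *
          ∑ i, ((∑ j, X i j * ((1 / (G : ℝ)) * ∑ g, βhat ω g j)) - ∑ j, X i j * β0 j) ^ 2
        ≤ 2 * α * lam_s * (∑ j, |β0 j|)
          + lam_s * ((1 - α) / 2) * (∑ j, (β0 j) ^ 2)
          + lam_d * ((G : ℝ) - 1) / 2 * (∑ j, (β0 j) ^ 2)} := by
  classical
  have hn' : (0:ℝ) < n := by exact_mod_cast hn
  have hp' : (1:ℝ) ≤ p := by exact_mod_cast hp
  have hG' : (0:ℝ) < G := by exact_mod_cast hG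
  set v : ℝ≥0 := ⟨σ ^ 2, sq_nonneg σ⟩ with hv_def
  have hvr : (v:ℝ) = σ ^ 2 := rfl
  have hv : v ≠ 0 := by
    intro hcon
    have h0 : (v:ℝ) = 0 := by rw [hcon]; simp
    rw [hvr] at h0
    nlinarith
  -- measurable modifications of the noise
  have hAEm : ∀ i, AEMeasurable (ε i) μ := by
    intro i
    by_contra hc
    have h0 : Measure.map (ε i) μ = 0 := Measure.map_of_not_aemeasurable hc
    rw [hgauss i] at h0
    have h1 : (gaussianReal 0 v) Set.univ = 1 := measure_univ
    rw [h0] at h1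
    simp at h1
  set ε' : Fin n → Ω → ℝ := fun i => (hAEm i).mk (ε i) with hε'
  have hmeas' : ∀ i, Measurable (ε' i) := fun i => (hAEm i).measurable_mk
  have hae : ∀ i, ε i =ᵐ[μ] ε' i := fun i => (hAEm i).ae_eq_mk
  have hgauss' : ∀ i, Measure.map (ε' i) μ = gaussianReal 0 v := fun i =>
    (Measure.map_congr (hae i)).symm.trans (hgauss i)
  have hindep' : iIndepFun ε' μ := iIndepFun_congr_ae hindep hae
  -- the threshold
  set q : ℝ := (t ^ 2 + 2 * Real.log p) / n with hq_def
  have hlogp : 0 ≤ Real.log p := Real.log_nonneg hp'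
  have hq0 : 0 < q := by positivity
  set a : ℝ := α * lam_s with ha_def
  have hkey : σ * Real.sqrt q ≤ a := by
    have h1 := mul_le_mul_of_nonneg_left hls hα₁.le
    calc σ * Real.sqrt q = α * (1 / α * σ * Real.sqrt q) := by field_simp
      _ ≤ α * lam_s := h1
  have hsqrtq : 0 < Real.sqrt q := Real.sqrt_pos.mpr hq0
  have ha0 : 0 < a := lt_of_lt_of_le (by positivity) hkey
  have hlam0 : 0 ≤ lam_s := by nlinarith [ha0, hα₁]
  have ha2 : σ ^ 2 * q ≤ a ^ 2 := by
    have h1 : (σ * Real.sqrt q) ^ 2 ≤ a ^ 2 := by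
      have := pow_le_pow_left₀ (by positivity : (0:ℝ) ≤ σ * Real.sqrt q) hkey 2
      exact this
    calc σ ^ 2 * q = (σ * Real.sqrt q) ^ 2 := by
          rw [mul_pow, Real.sq_sqrt hq0.le]
      _ ≤ a ^ 2 := h1
  set w : ℝ := σ ^ 2 / n with hw_def
  have hw0 : 0 < w := by positivity
  -- exponential bound
  have hp0 : (0:ℝ) < p := by linarith
  have hEb : Real.exp (-a ^ 2 / (2 * w)) ≤ Real.exp (-t ^ 2 / 2) / p := by
    have h2 : a ^ 2 / (2 * w) = a ^ 2 * n / (2 * σ ^ 2) := by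
      rw [hw_def]; field_simp; try ring
    have h3 : (t ^ 2 + 2 * Real.log p) / 2 = σ ^ 2 * q * n / (2 * σ ^ 2) := by
      rw [hq_def]; field_simp; try ring
    have h4 : σ ^ 2 * q * n ≤ a ^ 2 * n := by nlinarith [ha2, hn']
    have h1 : -a ^ 2 / (2 * w) ≤ -(t ^ 2 + 2 * Real.log p) / 2 := by
      rw [neg_div, neg_div, neg_le_neg_iff, h2, h3]
      gcongr
    calc Real.exp (-a ^ 2 / (2 * w)) ≤ Real.exp (-(t ^ 2 + 2 * Real.log p) / 2) :=
          Real.exp_le_exp.mpr h1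
      _ = Real.exp (-t ^ 2 / 2) / p := by
          rw [show -(t ^ 2 + 2 * Real.log p) / 2 = -t ^ 2 / 2 + -(Real.log p) by ring,
            Real.exp_add, Real.exp_neg, Real.exp_log hp0]
          ring
  -- per-coordinate variance
  have hwsum : ∀ j, w = (v:ℝ) * ∑ i, (X i j / (n:ℝ)) ^ 2 := by
    intro j
    have hXj : ∑ i, (X i j) ^ 2 = (n:ℝ) := by
      have h5 := hcol j
      field_simp at h5
      linarith [h5]
    have h6 : ∑ i, (X i j / (n:ℝ)) ^ 2 = (∑ i, (X i j) ^ 2) / (n:ℝ) ^ 2 := by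
      rw [Finset.sum_div]
      exact Finset.sum_congr rfl fun i _ => by rw [div_pow]
    rw [h6, hXj, hvr, hw_def]
    field_simp
    try ring
  -- the bad event
  set Spos : Fin p → Set Ω := fun j => {ω | a ≤ ∑ i, (X i j / (n:ℝ)) * ε' i ω} with hSpos
  set Sneg : Fin p → Set Ω := fun j => {ω | a ≤ ∑ i, (-(X i j / (n:ℝ))) * ε' i ω} with hSneg
  have hSposM : ∀ j, MeasurableSet (Spos j) := by
    intro j
    exact measurableSet_le measurable_const
      (Finset.measurable_sum _ fun i _ => ((hmeas' i).const_mul _))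
  have hSnegM : ∀ j, MeasurableSet (Sneg j) := by
    intro j
    exact measurableSet_le measurable_const
      (Finset.measurable_sum _ fun i _ => ((hmeas' i).const_mul _))
  have htailpos : ∀ j, μ (Spos j) ≤ ENNReal.ofReal (Real.exp (-t ^ 2 / 2) / p) := by
    intro j
    have h1 := gauss_sum_tail (fun i => X i j / (n:ℝ)) ε' hmeas' hindep' hv hgauss'
      ha0 (hwsum j) hw0
    rw [ENNReal.le_ofReal_iff_toReal_le (measure_ne_top μ _) (by positivity)]
    exact h1.trans hEb
  have htailneg : ∀ j, μ (Sneg j) ≤ ENNReal.ofReal (Real.exp (-t ^ 2 / 2) / p) := by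
    intro j
    have hwneg : w = (v:ℝ) * ∑ i, (-(X i j / (n:ℝ))) ^ 2 := by
      rw [hwsum j]
      congr 1
      exact Finset.sum_congr rfl fun i _ => (neg_sq _).symm
    have h1 := gauss_sum_tail (fun i => -(X i j / (n:ℝ))) ε' hmeas' hindep' hv hgauss'
      ha0 hwneg hw0
    rw [ENNReal.le_ofReal_iff_toReal_le (measure_ne_top μ _) (by positivity)]
    exact h1.trans hEb
  set B : Set Ω := ⋃ j, (Spos j ∪ Sneg j) with hB_def
  have hBM : MeasurableSet B := MeasurableSet.iUnion fun j => (hSposM j).union (hSnegM j)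
  have hBle : μ B ≤ ENNReal.ofReal (2 * Real.exp (-t ^ 2 / 2)) := by
    calc μ B ≤ ∑' j : Fin p, μ (Spos j ∪ Sneg j) := measure_iUnion_le _
      _ = ∑ j : Fin p, μ (Spos j ∪ Sneg j) := tsum_fintype _
      _ ≤ ∑ _j : Fin p, (ENNReal.ofReal (Real.exp (-t ^ 2 / 2) / p)
            + ENNReal.ofReal (Real.exp (-t ^ 2 / 2) / p)) :=
          Finset.sum_le_sum fun j _ =>
            le_trans (measure_union_le _ _) (add_le_add (htailpos j) (htailneg j))
      _ = (p : ℝ≥0∞) * (ENNReal.ofReal (Real.exp (-t ^ 2 / 2) / p)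
            + ENNReal.ofReal (Real.exp (-t ^ 2 / 2) / p)) := by
          rw [Finset.sum_const, Finset.card_univ, Fintype.card_fin, nsmul_eq_mul]
      _ = ENNReal.ofReal (2 * Real.exp (-t ^ 2 / 2)) := by
          rw [← ENNReal.ofReal_add (by positivity) (by positivity),
            ← ENNReal.ofReal_natCast p, ← ENNReal.ofReal_mul (by positivity)]
          congr 1
          field_simp
          ring
  have hBc : ENNReal.ofReal (1 - 2 * Real.exp (-t ^ 2 / 2)) ≤ μ Bᶜ := by
    rw [prob_compl_eq_one_sub hBM]
    calc ENNReal.ofReal (1 - 2 * Real.exp (-t ^ 2 / 2))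
        = ENNReal.ofReal 1 - ENNReal.ofReal (2 * Real.exp (-t ^ 2 / 2)) :=
          ENNReal.ofReal_sub _ (by positivity)
      _ = 1 - ENNReal.ofReal (2 * Real.exp (-t ^ 2 / 2)) := by rw [ENNReal.ofReal_one]
      _ ≤ 1 - μ B := tsub_le_tsub_left hBle 1
  -- the good event
  set Gd : Set Ω := {ω | ∀ i, ε i ω = ε' i ω} with hGd_def
  have hGd0 : μ Gdᶜ = 0 := by
    have h1 : ∀ᵐ ω ∂μ, ∀ i, ε i ω = ε' i ω := ae_all_iff.mpr fun i => hae i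
    have h2 := ae_iff.mp h1
    simpa [hGd_def, Set.compl_setOf] using h2
  have hsubset : Bᶜ ∩ Gd ⊆ {ω | (1 / (2 * (n : ℝ))) *
          ∑ i, ((∑ j, X i j * ((1 / (G : ℝ)) * ∑ g, βhat ω g j)) - ∑ j, X i j * β0 j) ^ 2
        ≤ 2 * α * lam_s * (∑ j, |β0 j|)
          + lam_s * ((1 - α) / 2) * (∑ j, (β0 j) ^ 2)
          + lam_d * ((G : ℝ) - 1) / 2 * (∑ j, (β0 j) ^ 2)} := by
    rintro ω ⟨hBc', hGd'⟩
    have hGdm : ∀ i, ε i ω = ε' i ω := hGd'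
    have hmax : ∀ j, |∑ i, X i j * ε i ω| ≤ (n:ℝ) * (α * lam_s) := by
      intro j
      have hnotin : ω ∉ B := hBc'
      have hpos' : ¬ (a ≤ ∑ i, (X i j / (n:ℝ)) * ε' i ω) := fun hcon =>
        hnotin (Set.mem_iUnion.mpr ⟨j, Or.inl hcon⟩)
      have hneg' : ¬ (a ≤ ∑ i, (-(X i j / (n:ℝ))) * ε' i ω) := fun hcon =>
        hnotin (Set.mem_iUnion.mpr ⟨j, Or.inr hcon⟩)
      have hflip : ∑ i, (-(X i j / (n:ℝ))) * ε' i ω = -∑ i, (X i j / (n:ℝ)) * ε' i ω := by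
        rw [← Finset.sum_neg_distrib]
        exact Finset.sum_congr rfl fun i _ => by ring
      rw [hflip] at hneg'
      have h3 : |∑ i, (X i j / (n:ℝ)) * ε' i ω| ≤ a := by
        rw [abs_le]
        constructor
        · linarith [not_le.mp hneg']
        · linarith [not_le.mp hpos']
      have h4 : ∑ i, (X i j / (n:ℝ)) * ε' i ω = (∑ i, X i j * ε i ω) / n := by
        rw [Finset.sum_div]
        refine Finset.sum_congr rfl fun i _ => ?_
        rw [hGdm i]
        ring
      rw [h4, abs_div, abs_of_pos hn', div_le_iff₀ hn'] at h3
      calc |∑ i, X i j * ε i ω| ≤ a * n := h3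
        _ = (n:ℝ) * (α * lam_s) := by rw [ha_def]; ring
    exact det_bound hn hG X β0 (fun i => ε i ω) α lam_s lam_d hα₂ hd hlam0 ha0.le
      (βhat ω) (hmin ω _) hmax
  calc ENNReal.ofReal (1 - 2 * Real.exp (-t ^ 2 / 2)) ≤ μ Bᶜ := hBc
    _ ≤ μ (Bᶜ ∩ Gd) + μ Gdᶜ := by
        refine le_trans (measure_mono ?_) (measure_union_le _ _)
        intro ω hω
        by_cases h : ω ∈ Gd
        · exact Or.inl ⟨hω, h⟩
        · exact Or.inr h
    _ = μ (Bᶜ ∩ Gd) := by rw [hGd0, add_zero]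
    _ ≤ _ := measure_mono hsubset
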